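/- There exist a constant K > 0 and an integer N₀ ≥ 2 such that for every integer N ≥ N₀ and every δv > 0, the matrix X is invertible and ‖X⁻¹Y‖₂ ≤ K·δv/δz²; that is, the 2-norm of the matrix W = X⁻¹Y is O(δv/δz²). -/

import Mathlib

/-- The `n×n` real tridiagonal matrix with 1-indexed subdiagonal entries
`sub_{i+1}` (at position `(i+1, i)`), diagonal entries `dia_i` and superdiagonal
entries `sup_i` (at position `(i, i+1)`). -/
def triMatR (n : ℕ) (sub dia sup : ℕ → ℝ) : Matrix (Fin n) (Fin n) ℝ :=
  Matrix.of fun i j =>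
    if i.val = j.val then dia (i.val + 1)
    else if i.val + 1 = j.val then sup (i.val + 1)
    else if j.val + 1 = i.val then sub (i.val + 1)
    else 0

/-- The operator norm of a real square matrix induced by the Euclidean vector norm,
i.e. its largest singular value. -/
noncomputable def opNorm2 {n : ℕ} (M : Matrix (Fin n) (Fin n) ℝ) : ℝ :=
  ‖LinearMap.toContinuousLinearMap (Matrix.toEuclideanLin M)‖

/-- The space step `δz = (z_r - z_l)/N`. -/
noncomputable def dz (zl zr : ℝ) (N : ℕ) : ℝ := (zr - zl) / N

/-- The grid point `z_i = z_l + i δz`. -/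
noncomputable def gridz (zl zr : ℝ) (N i : ℕ) : ℝ := zl + i * dz zl zr N

/-- First-order central difference `Δ_z f_i = (f_{i+1} - f_{i-1})/(2 δz)`. -/
noncomputable def Dz (f : ℝ → ℝ) (zl zr : ℝ) (N i : ℕ) : ℝ :=
  (f (gridz zl zr N (i + 1)) - f (gridz zl zr N (i - 1))) / (2 * dz zl zr N)

/-- Second-order central difference `Δ_zz f_i = (f_{i+1} - 2 f_i + f_{i-1})/δz²`. -/
noncomputable def Dzz (f : ℝ → ℝ) (zl zr : ℝ) (N i : ℕ) : ℝ :=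
  (f (gridz zl zr N (i + 1)) - 2 * f (gridz zl zr N i) + f (gridz zl zr N (i - 1))) /
    dz zl zr N ^ 2

/-- `γ_i = a_i/b_i + (2/b_i) Δ_z b_i`. -/
noncomputable def γc (a b : ℝ → ℝ) (zl zr : ℝ) (N i : ℕ) : ℝ :=
  a (gridz zl zr N i) / b (gridz zl zr N i) +
    (2 / b (gridz zl zr N i)) * Dz b zl zr N i

/-- `ζ_i = a_i - (δz²/12)((a_i/b_i) Δ_z a_i + (2/b_i) Δ_z a_i Δ_z b_i - Δ_zz a_i)`. -/
noncomputable def ζc (a b : ℝ → ℝ) (zl zr : ℝ) (N i : ℕ) : ℝ :=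
  a (gridz zl zr N i) - (dz zl zr N ^ 2 / 12) *
    ((a (gridz zl zr N i) / b (gridz zl zr N i)) * Dz a zl zr N i +
      (2 / b (gridz zl zr N i)) * Dz a zl zr N i * Dz b zl zr N i -
      Dzz a zl zr N i)

/-- `α_i = b_i + (δz²/12)((a_i/b_i) Δ_z b_i - 2Δ_z a_i + Δ_zz b_i - (2/b_i)(Δ_z b_i)² + a_i²/b_i)`. -/
noncomputable def αc (a b : ℝ → ℝ) (zl zr : ℝ) (N i : ℕ) : ℝ :=
  b (gridz zl zr N i) + (dz zl zr N ^ 2 / 12) *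
    ((a (gridz zl zr N i) / b (gridz zl zr N i)) * Dz b zl zr N i -
      2 * Dz a zl zr N i + Dzz b zl zr N i -
      (2 / b (gridz zl zr N i)) * Dz b zl zr N i ^ 2 +
      a (gridz zl zr N i) ^ 2 / b (gridz zl zr N i))

/-- `p_i = (2 + δz γ_i)/(24 δv)`. -/
noncomputable def pc (a b : ℝ → ℝ) (zl zr : ℝ) (N : ℕ) (δv : ℝ) (i : ℕ) : ℝ :=
  (2 + dz zl zr N * γc a b zl zr N i) / (24 * δv)

/-- `q_i = 5/(6 δv)`. -/
noncomputable def qc (δv : ℝ) (i : ℕ) : ℝ := 5 / (6 * δv)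

/-- `r_i = (2 - δz γ_i)/(24 δv)`. -/
noncomputable def rc (a b : ℝ → ℝ) (zl zr : ℝ) (N : ℕ) (δv : ℝ) (i : ℕ) : ℝ :=
  (2 - dz zl zr N * γc a b zl zr N i) / (24 * δv)

/-- `l_i = -ζ_i/(2 δz) - α_i/δz²`. -/
noncomputable def lc (a b : ℝ → ℝ) (zl zr : ℝ) (N i : ℕ) : ℝ :=
  -ζc a b zl zr N i / (2 * dz zl zr N) - αc a b zl zr N i / dz zl zr N ^ 2

/-- `m_i = 2 α_i/δz²`. -/
noncomputable def mc (a b : ℝ → ℝ) (zl zr : ℝ) (N i : ℕ) : ℝ :=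
  2 * αc a b zl zr N i / dz zl zr N ^ 2

/-- `n_i = ζ_i/(2 δz) - α_i/δz²`. -/
noncomputable def nc (a b : ℝ → ℝ) (zl zr : ℝ) (N i : ℕ) : ℝ :=
  ζc a b zl zr N i / (2 * dz zl zr N) - αc a b zl zr N i / dz zl zr N ^ 2

/-- The `(N-1)×(N-1)` tridiagonal matrix `X` with `X_{i,i} = q_i`, `X_{i,i+1} = r_i`,
`X_{i+1,i} = p_{i+1}`. -/
noncomputable def Xmat (a b : ℝ → ℝ) (zl zr : ℝ) (N : ℕ) (δv : ℝ) :
    Matrix (Fin (N - 1)) (Fin (N - 1)) ℝ :=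
  triMatR (N - 1) (pc a b zl zr N δv) (qc δv) (rc a b zl zr N δv)

/-- The `(N-1)×(N-1)` tridiagonal matrix `Y` with `Y_{i,i} = m_i`, `Y_{i,i+1} = n_i`,
`Y_{i+1,i} = l_{i+1}`. -/
noncomputable def Ymat (a b : ℝ → ℝ) (zl zr : ℝ) (N : ℕ) (δv : ℝ) :
    Matrix (Fin (N - 1)) (Fin (N - 1)) ℝ :=
  triMatR (N - 1) (lc a b zl zr N) (mc a b zl zr N) (nc a b zl zr N)


----------------------------------------------------------------
-- Auxiliary machinery
----------------------------------------------------------------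

noncomputable def ev {n : ℕ} (x : Fin n → ℝ) : EuclideanSpace ℝ (Fin n) :=
  (WithLp.equiv 2 (Fin n → ℝ)).symm x

noncomputable def toE {n : ℕ} (M : Matrix (Fin n) (Fin n) ℝ) :
    EuclideanSpace ℝ (Fin n) →L[ℝ] EuclideanSpace ℝ (Fin n) :=
  LinearMap.toContinuousLinearMap (Matrix.toEuclideanLin M)

lemma opNorm2_def {n : ℕ} (M : Matrix (Fin n) (Fin n) ℝ) : opNorm2 M = ‖toE M‖ := rfl

lemma toE_apply {n : ℕ} (M : Matrix (Fin n) (Fin n) ℝ) (x : Fin n → ℝ) :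
    toE M (ev x) = ev (M.mulVec x) := by
  simp [toE, ev, Matrix.toEuclideanLin_apply]

lemma norm_ev {n : ℕ} (x : Fin n → ℝ) : ‖ev x‖ = Real.sqrt (∑ i, x i ^ 2) := by
  rw [show ev x = ((WithLp.equiv 2 (Fin n → ℝ)).symm x) from rfl, EuclideanSpace.norm_eq]
  congr 1
  refine Finset.sum_congr rfl fun i _ => ?_
  show ‖x i‖ ^ 2 = x i ^ 2
  rw [Real.norm_eq_abs, sq_abs]

lemma opNorm2_le {n : ℕ} (M : Matrix (Fin n) (Fin n) ℝ) (C : ℝ) (hC : 0 ≤ C)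
    (h : ∀ x : Fin n → ℝ, ‖ev (M.mulVec x)‖ ≤ C * ‖ev x‖) : opNorm2 M ≤ C := by
  rw [opNorm2_def]
  refine ContinuousLinearMap.opNorm_le_bound _ hC fun y => ?_
  have := h ((WithLp.equiv 2 (Fin n → ℝ)) y)
  exact this

lemma opNorm2_mul_le {n : ℕ} (A B : Matrix (Fin n) (Fin n) ℝ) :
    opNorm2 (A * B) ≤ opNorm2 A * opNorm2 B := by
  have hE : toE (A * B) = (toE A).comp (toE B) := by
    ext y
    simp [toE, Matrix.toEuclideanLin_apply, Matrix.mulVec_mulVec]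
  rw [opNorm2_def, opNorm2_def, opNorm2_def, hE]
  exact ContinuousLinearMap.opNorm_comp_le _ _

lemma norm_ev_le_of_sq {n : ℕ} (v w : Fin n → ℝ) (c : ℝ) (hc : 0 ≤ c)
    (h : ∑ i, v i ^ 2 ≤ c ^ 2 * ∑ i, w i ^ 2) : ‖ev v‖ ≤ c * ‖ev w‖ := by
  rw [norm_ev, norm_ev, ← Real.sqrt_sq hc, ← Real.sqrt_mul (sq_nonneg c)]
  exact Real.sqrt_le_sqrt h

lemma mulVec_perm_eq {n : ℕ} (M : Matrix (Fin n) (Fin n) ℝ) (g : Equiv.Perm (Fin n))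
    (h0 : ∀ i j, j ≠ g i → M i j = 0) (x : Fin n → ℝ) (i : Fin n) :
    M.mulVec x i = M i (g i) * x (g i) := by
  rw [Matrix.mulVec, dotProduct]
  rw [Finset.sum_eq_single (g i)]
  · intro j _ hj
    rw [h0 i j hj, zero_mul]
  · intro hj; exact absurd (Finset.mem_univ _) hj

lemma norm_mulVec_perm_le {n : ℕ} (M : Matrix (Fin n) (Fin n) ℝ) (g : Equiv.Perm (Fin n))
    (C : ℝ) (hC : 0 ≤ C) (h0 : ∀ i j, j ≠ g i → M i j = 0) (hb : ∀ i, |M i (g i)| ≤ C)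
    (x : Fin n → ℝ) : ‖ev (M.mulVec x)‖ ≤ C * ‖ev x‖ := by
  refine norm_ev_le_of_sq _ _ C hC ?_
  have : ∑ i, x (g i) ^ 2 = ∑ i, x i ^ 2 := Equiv.sum_comp g fun i => x i ^ 2
  rw [← this, Finset.mul_sum]
  refine Finset.sum_le_sum fun i _ => ?_
  rw [mulVec_perm_eq M g h0 x i, mul_pow]
  have h1 : M i (g i) ^ 2 ≤ C ^ 2 := sq_le_sq' (neg_le_of_abs_le (hb i)) (le_of_abs_le (hb i))
  exact mul_le_mul_of_nonneg_right h1 (sq_nonneg _)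

lemma triMatR_apply (n : ℕ) (sub dia sup : ℕ → ℝ) (i j : Fin n) :
    triMatR n sub dia sup i j =
      if i.val = j.val then dia (i.val + 1)
      else if i.val + 1 = j.val then sup (i.val + 1)
      else if j.val + 1 = i.val then sub (i.val + 1)
      else 0 := rfl

lemma triMatR_split (n : ℕ) (sub dia sup : ℕ → ℝ) :
    triMatR n sub dia sup =
      triMatR n sub (fun _ => 0) (fun _ => 0) + triMatR n (fun _ => 0) dia (fun _ => 0) +
        triMatR n (fun _ => 0) (fun _ => 0) sup := by
  ext i j
  simp only [triMatR_apply, Matrix.add_apply]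
  split_ifs <;> ring

lemma ev_add {n : ℕ} (u v : Fin n → ℝ) : ev (u + v) = ev u + ev v := rfl
lemma ev_smul {n : ℕ} (c : ℝ) (u : Fin n → ℝ) : ev (c • u) = c • ev u := rfl

section structural
variable {n : ℕ} [NeZero n]

lemma addRight_val (i : Fin n) (h : i.val + 1 < n) :
    ((Equiv.addRight (1 : Fin n)) i).val = i.val + 1 := by
  simp only [Equiv.coe_addRight]
  rw [Fin.add_def]
  show (i.val + (1 : Fin n).val) % n = i.val + 1
  have h1 : (1 : Fin n).val = 1 % n := rfl
  have h2 : 1 < n := by omega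
  rw [h1, Nat.mod_eq_of_lt h2, Nat.mod_eq_of_lt h]

lemma addRight_val_top (i : Fin n) (h : i.val + 1 = n) :
    ((Equiv.addRight (1 : Fin n)) i).val = 0 := by
  simp only [Equiv.coe_addRight]
  rw [Fin.add_def]
  show (i.val + (1 : Fin n).val) % n = 0
  have h1 : (1 : Fin n).val = 1 % n := rfl
  rcases Nat.lt_or_ge 1 n with h2 | h2
  · rw [h1, Nat.mod_eq_of_lt h2, h, Nat.mod_self]
  · have h4 : (i.val + (1 : Fin n).val) % n < n := Nat.mod_lt _ (Nat.pos_of_ne_zero (NeZero.ne n))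
    omega

lemma subRight_eq (i : Fin n) (h : 1 ≤ i.val) :
    (Equiv.addRight (1 : Fin n)).symm i = ⟨i.val - 1, by have := i.isLt; omega⟩ := by
  rw [Equiv.symm_apply_eq]
  refine (Fin.ext ?_).symm
  rw [addRight_val ⟨i.val - 1, by have := i.isLt; omega⟩ (by simpa using by have := i.isLt; omega)]
  simp; omega

lemma subRight_eq_bot (i : Fin n) (h : i.val = 0) :
    (Equiv.addRight (1 : Fin n)).symm i = ⟨n - 1, by have := Nat.pos_of_ne_zero (NeZero.ne n); omega⟩ := by
  rw [Equiv.symm_apply_eq]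
  refine (Fin.ext ?_).symm
  rw [addRight_val_top ⟨n - 1, by have := Nat.pos_of_ne_zero (NeZero.ne n); omega⟩
    (by have := Nat.pos_of_ne_zero (NeZero.ne n); simpa using by omega)]
  omega

lemma U_zero (sup : ℕ → ℝ) (i j : Fin n) (h : j ≠ (Equiv.addRight (1 : Fin n)) i) :
    triMatR n (fun _ => 0) (fun _ => 0) sup i j = 0 := by
  rw [triMatR_apply]
  split_ifs with h1 h2 h3 <;> try rfl
  exact absurd (Fin.ext (by rw [addRight_val i (h2 ▸ j.isLt), ← h2])) h

lemma U_bound (sup : ℕ → ℝ) (C : ℝ) (hC : 0 ≤ C) (hs : ∀ k, 1 ≤ k → k + 1 ≤ n → |sup k| ≤ C)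
    (i : Fin n) :
    |triMatR n (fun _ => 0) (fun _ => 0) sup i ((Equiv.addRight (1 : Fin n)) i)| ≤ C := by
  rcases Nat.lt_or_ge (i.val + 1) n with h | h
  · have hv := addRight_val i h
    rw [triMatR_apply, hv, if_neg (by omega), if_pos rfl]
    exact hs _ (by omega) (by omega)
  · have hv := addRight_val_top i (by have := i.isLt; omega)
    rw [triMatR_apply, hv]
    split_ifs <;> first | simpa using hC | omega | exact (by assumption : False).elim

lemma L_zero (sub : ℕ → ℝ) (i j : Fin n) (h : j ≠ (Equiv.addRight (1 : Fin n)).symm i) :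
    triMatR n sub (fun _ => 0) (fun _ => 0) i j = 0 := by
  rw [triMatR_apply]
  split_ifs with h1 h2 h3 <;> try rfl
  refine absurd ((Equiv.eq_symm_apply _).mpr ?_) h
  exact Fin.ext (by rw [addRight_val j (h3 ▸ i.isLt), h3])

lemma subRight_val (i : Fin n) (h : 1 ≤ i.val) :
    ((Equiv.addRight (1 : Fin n)).symm i).val = i.val - 1 := by
  rw [subRight_eq i h]

lemma subRight_val_bot (i : Fin n) (h : i.val = 0) :
    ((Equiv.addRight (1 : Fin n)).symm i).val = n - 1 := by
  rw [subRight_eq_bot i h]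

lemma L_bound (sub : ℕ → ℝ) (C : ℝ) (hC : 0 ≤ C) (hs : ∀ k, 2 ≤ k → k ≤ n → |sub k| ≤ C)
    (i : Fin n) :
    |triMatR n sub (fun _ => 0) (fun _ => 0) i ((Equiv.addRight (1 : Fin n)).symm i)| ≤ C := by
  rcases Nat.lt_or_ge 0 i.val with h | h
  · rw [triMatR_apply, subRight_val i h]
    have hi := i.isLt
    rw [if_neg (by omega), if_neg (by omega), if_pos (by omega)]
    exact hs _ (by omega) (by omega)
  · rw [triMatR_apply, subRight_val_bot i (by omega)]
    have hn := Nat.pos_of_ne_zero (NeZero.ne n)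
    split_ifs <;> first | simpa using hC | omega

lemma D_zero (dia : ℕ → ℝ) (i j : Fin n) (h : j ≠ (Equiv.refl (Fin n)) i) :
    triMatR n (fun _ => 0) dia (fun _ => 0) i j = 0 := by
  rw [triMatR_apply]
  have : ¬ i.val = j.val := fun hv => h (Fin.ext hv.symm)
  rw [if_neg this]
  split_ifs <;> rfl

lemma D_bound (dia : ℕ → ℝ) (C : ℝ) (hs : ∀ k, 1 ≤ k → k ≤ n → |dia k| ≤ C) (i : Fin n) :
    |triMatR n (fun _ => 0) dia (fun _ => 0) i ((Equiv.refl (Fin n)) i)| ≤ C := by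
  rw [triMatR_apply]
  simp only [Equiv.refl_apply, if_pos rfl]
  exact hs _ (by omega) (by have := i.isLt; omega)

lemma opNorm2_tri_le (sub dia sup : ℕ → ℝ) (C : ℝ) (hC : 0 ≤ C)
    (hsub : ∀ k, 2 ≤ k → k ≤ n → |sub k| ≤ C)
    (hdia : ∀ k, 1 ≤ k → k ≤ n → |dia k| ≤ C)
    (hsup : ∀ k, 1 ≤ k → k + 1 ≤ n → |sup k| ≤ C) :
    opNorm2 (triMatR n sub dia sup) ≤ 3 * C := by
  apply opNorm2_le _ _ (by linarith)
  intro x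
  rw [triMatR_split, Matrix.add_mulVec, Matrix.add_mulVec, ev_add, ev_add]
  have hL := norm_mulVec_perm_le (triMatR n sub (fun _ => 0) (fun _ => 0))
    (Equiv.addRight (1 : Fin n)).symm C hC (fun i j h => L_zero sub i j h)
    (fun i => L_bound sub C hC hsub i) x
  have hD := norm_mulVec_perm_le (triMatR n (fun _ => 0) dia (fun _ => 0))
    (Equiv.refl (Fin n)) C hC (fun i j h => D_zero dia i j h)
    (fun i => D_bound dia C hdia i) x
  have hU := norm_mulVec_perm_le (triMatR n (fun _ => 0) (fun _ => 0) sup)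
    (Equiv.addRight (1 : Fin n)) C hC (fun i j h => U_zero sup i j h)
    (fun i => U_bound sup C hC hsup i) x
  calc ‖ev ((triMatR n sub (fun _ => 0) (fun _ => 0)).mulVec x) +
        ev ((triMatR n (fun _ => 0) dia (fun _ => 0)).mulVec x) +
        ev ((triMatR n (fun _ => 0) (fun _ => 0) sup).mulVec x)‖
      ≤ ‖ev ((triMatR n sub (fun _ => 0) (fun _ => 0)).mulVec x)‖ +
        ‖ev ((triMatR n (fun _ => 0) dia (fun _ => 0)).mulVec x)‖ +
        ‖ev ((triMatR n (fun _ => 0) (fun _ => 0) sup).mulVec x)‖ := norm_add₃_le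
    _ ≤ C * ‖ev x‖ + C * ‖ev x‖ + C * ‖ev x‖ := by linarith
    _ = 3 * C * ‖ev x‖ := by ring

lemma tri_lower (sub dia sup : ℕ → ℝ) (q C : ℝ) (hC : 0 ≤ C)
    (hdia : ∀ k, 1 ≤ k → k ≤ n → dia k = q)
    (hsub : ∀ k, 2 ≤ k → k ≤ n → |sub k| ≤ C)
    (hsup : ∀ k, 1 ≤ k → k + 1 ≤ n → |sup k| ≤ C)
    (x : Fin n → ℝ) :
    (q - 2 * C) * ‖ev x‖ ≤ ‖ev ((triMatR n sub dia sup).mulVec x)‖ := by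
  have hDx : (triMatR n (fun _ => 0) dia (fun _ => 0)).mulVec x = q • x := by
    funext i
    rw [mulVec_perm_eq _ (Equiv.refl _) (fun i j h => D_zero dia i j h) x i]
    simp only [Equiv.refl_apply, Pi.smul_apply, smul_eq_mul]
    rw [triMatR_apply, if_pos rfl, hdia _ (by omega) (by have := i.isLt; omega)]
  have hTx : (triMatR n sub dia sup).mulVec x =
      (triMatR n sub (fun _ => 0) (fun _ => 0)).mulVec x +
      (triMatR n (fun _ => 0) dia (fun _ => 0)).mulVec x +
      (triMatR n (fun _ => 0) (fun _ => 0) sup).mulVec x := by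
    rw [triMatR_split n sub dia sup, Matrix.add_mulVec, Matrix.add_mulVec]
  have hL := norm_mulVec_perm_le (triMatR n sub (fun _ => 0) (fun _ => 0))
    (Equiv.addRight (1 : Fin n)).symm C hC (fun i j h => L_zero sub i j h)
    (fun i => L_bound sub C hC hsub i) x
  have hU := norm_mulVec_perm_le (triMatR n (fun _ => 0) (fun _ => 0) sup)
    (Equiv.addRight (1 : Fin n)) C hC (fun i j h => U_zero sup i j h)
    (fun i => U_bound sup C hC hsup i) x
  have hDn : ‖ev ((triMatR n (fun _ => 0) dia (fun _ => 0)).mulVec x)‖ = |q| * ‖ev x‖ := by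
    rw [hDx, ev_smul, norm_smul, Real.norm_eq_abs]
  have key : ev ((triMatR n (fun _ => 0) dia (fun _ => 0)).mulVec x) =
      ev ((triMatR n sub dia sup).mulVec x) -
      ev ((triMatR n sub (fun _ => 0) (fun _ => 0)).mulVec x) -
      ev ((triMatR n (fun _ => 0) (fun _ => 0) sup).mulVec x) := by
    rw [hTx, ev_add, ev_add]; abel
  have h1 : ‖ev ((triMatR n (fun _ => 0) dia (fun _ => 0)).mulVec x)‖ ≤
      ‖ev ((triMatR n sub dia sup).mulVec x)‖ +
      ‖ev ((triMatR n sub (fun _ => 0) (fun _ => 0)).mulVec x)‖ +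
      ‖ev ((triMatR n (fun _ => 0) (fun _ => 0) sup).mulVec x)‖ := by
    rw [key]
    have t1 := norm_sub_le
      (ev ((triMatR n sub dia sup).mulVec x) -
        ev ((triMatR n sub (fun _ => 0) (fun _ => 0)).mulVec x))
      (ev ((triMatR n (fun _ => 0) (fun _ => 0) sup).mulVec x))
    have t2 := norm_sub_le (ev ((triMatR n sub dia sup).mulVec x))
      (ev ((triMatR n sub (fun _ => 0) (fun _ => 0)).mulVec x))
    linarith
  have hqx : q * ‖ev x‖ ≤ |q| * ‖ev x‖ :=
    mul_le_mul_of_nonneg_right (le_abs_self q) (norm_nonneg _)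
  nlinarith [norm_nonneg (ev x)]

lemma inv_bound (M : Matrix (Fin n) (Fin n) ℝ) (c : ℝ) (hc : 0 < c)
    (h : ∀ x : Fin n → ℝ, c * ‖ev x‖ ≤ ‖ev (M.mulVec x)‖) :
    IsUnit M.det ∧ opNorm2 M⁻¹ ≤ 1 / c := by
  have hdet : M.det ≠ 0 := by
    intro h0
    obtain ⟨v, hv, hMv⟩ := (Matrix.exists_mulVec_eq_zero_iff).mpr h0
    have hle := h v
    rw [hMv] at hle
    have h2 : ‖ev (0 : Fin n → ℝ)‖ = 0 := by
      rw [show ev (0 : Fin n → ℝ) = 0 from rfl, norm_zero]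
    have h3 : ev v ≠ 0 := by
      intro hev
      exact hv ((WithLp.equiv 2 (Fin n → ℝ)).symm.injective (by exact hev))
    have h4 : 0 < ‖ev v‖ := norm_pos_iff.mpr h3
    rw [h2] at hle
    nlinarith
  refine ⟨isUnit_iff_ne_zero.mpr hdet, ?_⟩
  apply opNorm2_le _ _ (by positivity)
  intro x
  have key : M.mulVec (M⁻¹.mulVec x) = x := by
    rw [Matrix.mulVec_mulVec, Matrix.mul_nonsing_inv _ (isUnit_iff_ne_zero.mpr hdet),
      Matrix.one_mulVec]
  have hle := h (M⁻¹.mulVec x)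
  rw [key] at hle
  rw [div_mul_eq_mul_div, le_div_iff₀ hc]
  nlinarith

end structural

lemma dz_pos {zl zr : ℝ} (h : zl < zr) {N : ℕ} (hN : 0 < N) : 0 < dz zl zr N :=
  div_pos (by linarith) (Nat.cast_pos.mpr hN)

lemma gridz_mem {zl zr : ℝ} (h : zl < zr) {N : ℕ} (hN : 0 < N) {i : ℕ} (hi : i ≤ N) :
    gridz zl zr N i ∈ Set.Icc zl zr := by
  have hd : 0 < dz zl zr N := dz_pos h hN
  have hiN : (i : ℝ) ≤ N := Nat.cast_le.mpr hi
  have hNd : (N : ℝ) * dz zl zr N = zr - zl := by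
    rw [dz]; field_simp
  constructor
  · have : 0 ≤ (i : ℝ) * dz zl zr N := by positivity
    rw [gridz]; linarith
  · have : (i : ℝ) * dz zl zr N ≤ (N : ℝ) * dz zl zr N :=
      mul_le_mul_of_nonneg_right hiN hd.le
    rw [gridz]; linarith

lemma abs_Dz_le {zl zr : ℝ} (h : zl < zr) {N : ℕ} (hN : 0 < N) (f : ℝ → ℝ) (F : ℝ)
    (hF : ∀ z ∈ Set.Icc zl zr, |f z| ≤ F) {i : ℕ} (hi1 : 1 ≤ i) (hi2 : i + 1 ≤ N) :
    |Dz f zl zr N i| ≤ F / dz zl zr N := by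
  have hd : 0 < dz zl zr N := dz_pos h hN
  have h1 := hF _ (gridz_mem h hN hi2)
  have h2 := hF _ (gridz_mem h hN (by omega : i - 1 ≤ N))
  have hnum : |f (gridz zl zr N (i + 1)) - f (gridz zl zr N (i - 1))| ≤ 2 * F := by
    rw [sub_eq_add_neg]
    refine (abs_add_le _ _).trans ?_
    rw [abs_neg]; linarith
  rw [Dz, abs_div, abs_of_pos (by linarith : (0:ℝ) < 2 * dz zl zr N)]
  calc |f (gridz zl zr N (i + 1)) - f (gridz zl zr N (i - 1))| / (2 * dz zl zr N)
      ≤ (2 * F) / (2 * dz zl zr N) := by gcongr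
    _ = F / dz zl zr N := mul_div_mul_left _ _ two_ne_zero

lemma abs_Dzz_le {zl zr : ℝ} (h : zl < zr) {N : ℕ} (hN : 0 < N) (f : ℝ → ℝ) (F : ℝ)
    (hF : ∀ z ∈ Set.Icc zl zr, |f z| ≤ F) {i : ℕ} (hi1 : 1 ≤ i) (hi2 : i + 1 ≤ N) :
    |Dzz f zl zr N i| ≤ 4 * F / dz zl zr N ^ 2 := by
  have hd : 0 < dz zl zr N := dz_pos h hN
  have h1 := hF _ (gridz_mem h hN hi2)
  have h2 := hF _ (gridz_mem h hN (by omega : i - 1 ≤ N))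
  have h3 := hF _ (gridz_mem h hN (by omega : i ≤ N))
  have habs := abs_nonneg (f (gridz zl zr N i))
  have hnum : |f (gridz zl zr N (i + 1)) - 2 * f (gridz zl zr N i) +
      f (gridz zl zr N (i - 1))| ≤ 4 * F := by
    have t1 : |f (gridz zl zr N (i + 1)) - 2 * f (gridz zl zr N i)| ≤
        |f (gridz zl zr N (i + 1))| + |2 * f (gridz zl zr N i)| := by
      rw [sub_eq_add_neg]; exact (abs_add_le _ _).trans (by rw [abs_neg])
    have t2 := abs_add_le (f (gridz zl zr N (i + 1)) - 2 * f (gridz zl zr N i))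
      (f (gridz zl zr N (i - 1)))
    rw [abs_mul, abs_two] at t1
    linarith
  rw [Dzz, abs_div, abs_of_pos (by positivity : (0:ℝ) < dz zl zr N ^ 2)]
  gcongr

lemma abs_sub'' (x y : ℝ) : |x - y| ≤ |x| + |y| := by
  rw [sub_eq_add_neg]
  exact (abs_add_le _ _).trans (le_of_eq (by rw [abs_neg]))

section bounds
variable {zl zr : ℝ} (h : zl < zr) {N : ℕ} (hN : 0 < N) (a b : ℝ → ℝ) (ε A B : ℝ)
  (hε : 0 < ε) (hA : 0 ≤ A) (hB : 0 ≤ B)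
  (hbe : ∀ z ∈ Set.Icc zl zr, ε ≤ b z)
  (haA : ∀ z ∈ Set.Icc zl zr, |a z| ≤ A)
  (hbB : ∀ z ∈ Set.Icc zl zr, |b z| ≤ B)
  {i : ℕ} (hi1 : 1 ≤ i) (hi2 : i + 1 ≤ N)

include h hN hε hA hbe haA hi1 hi2

lemma gamma_bound
    (hub : |b (gridz zl zr N (i + 1)) - b (gridz zl zr N (i - 1))| ≤ ε)
    (hδA : dz zl zr N * A ≤ ε) :
    |dz zl zr N * γc a b zl zr N i| ≤ 2 := by
  have hδ : 0 < dz zl zr N := dz_pos h hN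
  have hbi : ε ≤ b (gridz zl zr N i) := hbe _ (gridz_mem h hN (by omega))
  have hbip : 0 < b (gridz zl zr N i) := lt_of_lt_of_le hε hbi
  have hai : |a (gridz zl zr N i)| ≤ A := haA _ (gridz_mem h hN (by omega))
  have e : dz zl zr N * γc a b zl zr N i =
      (dz zl zr N * a (gridz zl zr N i) +
        (b (gridz zl zr N (i + 1)) - b (gridz zl zr N (i - 1)))) / b (gridz zl zr N i) := by
    rw [γc, Dz]
    field_simp
  rw [e, abs_div, abs_of_pos hbip]
  have hnum : |dz zl zr N * a (gridz zl zr N i) +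
      (b (gridz zl zr N (i + 1)) - b (gridz zl zr N (i - 1)))| ≤ ε + ε := by
    refine (abs_add_le _ _).trans ?_
    have : |dz zl zr N * a (gridz zl zr N i)| ≤ ε := by
      rw [abs_mul, abs_of_pos hδ]
      nlinarith
    linarith
  rw [div_le_iff₀ hbip]
  nlinarith

include hB hbB

lemma zeta_bound (hδ1 : dz zl zr N ≤ 1) :
    |ζc a b zl zr N i| ≤ A + (A ^ 2 / ε + 2 * A * B / ε + 4 * A) / 12 := by
  have hδ : 0 < dz zl zr N := dz_pos h hN
  have hbi : ε ≤ b (gridz zl zr N i) := hbe _ (gridz_mem h hN (by omega))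
  have hbip : 0 < b (gridz zl zr N i) := lt_of_lt_of_le hε hbi
  have hai : |a (gridz zl zr N i)| ≤ A := haA _ (gridz_mem h hN (by omega))
  have hDa := abs_Dz_le h hN a A haA hi1 hi2
  have hDb := abs_Dz_le h hN b B hbB hi1 hi2
  have hDza := abs_Dzz_le h hN a A haA hi1 hi2
  have habi : |a (gridz zl zr N i) / b (gridz zl zr N i)| ≤ A / ε := by
    rw [abs_div, abs_of_pos hbip]
    exact div_le_div₀ hA hai hε hbi
  have h2bi : |2 / b (gridz zl zr N i)| ≤ 2 / ε := by
    rw [abs_div, abs_two]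
    exact div_le_div₀ (by norm_num) le_rfl hε (by rw [abs_of_pos hbip]; exact hbi)
  have t1 : |a (gridz zl zr N i) / b (gridz zl zr N i) * Dz a zl zr N i| ≤
      A / ε * (A / dz zl zr N) := by
    rw [abs_mul]
    exact mul_le_mul habi hDa (abs_nonneg _) (by positivity)
  have t2 : |2 / b (gridz zl zr N i) * Dz a zl zr N i * Dz b zl zr N i| ≤
      2 / ε * (A / dz zl zr N) * (B / dz zl zr N) := by
    rw [abs_mul, abs_mul]
    have u1 : |2 / b (gridz zl zr N i)| * |Dz a zl zr N i| ≤ 2 / ε * (A / dz zl zr N) :=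
      mul_le_mul h2bi hDa (abs_nonneg _) (by positivity)
    exact mul_le_mul u1 hDb (abs_nonneg _) (by positivity)
  have hT : |a (gridz zl zr N i) / b (gridz zl zr N i) * Dz a zl zr N i +
      2 / b (gridz zl zr N i) * Dz a zl zr N i * Dz b zl zr N i - Dzz a zl zr N i| ≤
      A / ε * (A / dz zl zr N) + 2 / ε * (A / dz zl zr N) * (B / dz zl zr N) +
        4 * A / dz zl zr N ^ 2 := by
    have u2 := abs_add_le (a (gridz zl zr N i) / b (gridz zl zr N i) * Dz a zl zr N i)
      (2 / b (gridz zl zr N i) * Dz a zl zr N i * Dz b zl zr N i)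
    have u3 : |a (gridz zl zr N i) / b (gridz zl zr N i) * Dz a zl zr N i +
        2 / b (gridz zl zr N i) * Dz a zl zr N i * Dz b zl zr N i - Dzz a zl zr N i| ≤
        |a (gridz zl zr N i) / b (gridz zl zr N i) * Dz a zl zr N i +
        2 / b (gridz zl zr N i) * Dz a zl zr N i * Dz b zl zr N i| + |Dzz a zl zr N i| := by
      rw [sub_eq_add_neg]
      exact (abs_add_le _ _).trans (by rw [abs_neg])
    linarith
  rw [ζc]
  have u4 : |a (gridz zl zr N i) - dz zl zr N ^ 2 / 12 *
      (a (gridz zl zr N i) / b (gridz zl zr N i) * Dz a zl zr N i +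
        2 / b (gridz zl zr N i) * Dz a zl zr N i * Dz b zl zr N i - Dzz a zl zr N i)| ≤
      |a (gridz zl zr N i)| + dz zl zr N ^ 2 / 12 *
      |a (gridz zl zr N i) / b (gridz zl zr N i) * Dz a zl zr N i +
        2 / b (gridz zl zr N i) * Dz a zl zr N i * Dz b zl zr N i - Dzz a zl zr N i| := by
    rw [sub_eq_add_neg]
    refine (abs_add_le _ _).trans ?_
    rw [abs_neg, abs_mul, abs_of_pos (by positivity : (0:ℝ) < dz zl zr N ^ 2 / 12)]
  have e : dz zl zr N ^ 2 / 12 * (A / ε * (A / dz zl zr N) +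
      2 / ε * (A / dz zl zr N) * (B / dz zl zr N) + 4 * A / dz zl zr N ^ 2) =
      (dz zl zr N * (A ^ 2 / ε) + 2 * A * B / ε + 4 * A) / 12 := by
    field_simp
  have hmono : dz zl zr N ^ 2 / 12 *
      |a (gridz zl zr N i) / b (gridz zl zr N i) * Dz a zl zr N i +
        2 / b (gridz zl zr N i) * Dz a zl zr N i * Dz b zl zr N i - Dzz a zl zr N i| ≤
      (dz zl zr N * (A ^ 2 / ε) + 2 * A * B / ε + 4 * A) / 12 := by
    rw [← e]
    exact mul_le_mul_of_nonneg_left hT (by positivity)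
  have hfin : dz zl zr N * (A ^ 2 / ε) ≤ A ^ 2 / ε := by
    nlinarith [div_nonneg (sq_nonneg A) hε.le]
  calc |a (gridz zl zr N i) - dz zl zr N ^ 2 / 12 * _| ≤ _ := u4
    _ ≤ A + (A ^ 2 / ε + 2 * A * B / ε + 4 * A) / 12 := by linarith

end bounds



section bounds2
variable {zl zr : ℝ} (h : zl < zr) {N : ℕ} (hN : 0 < N) (a b : ℝ → ℝ) (ε A B : ℝ)
  (hε : 0 < ε) (hA : 0 ≤ A) (hB : 0 ≤ B)
  (hbe : ∀ z ∈ Set.Icc zl zr, ε ≤ b z)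
  (haA : ∀ z ∈ Set.Icc zl zr, |a z| ≤ A)
  (hbB : ∀ z ∈ Set.Icc zl zr, |b z| ≤ B)
  {i : ℕ} (hi1 : 1 ≤ i) (hi2 : i + 1 ≤ N)

include h hN hε hA hB hbe haA hbB hi1 hi2

set_option maxHeartbeats 1000000 in
lemma alpha_bound (hδ1 : dz zl zr N ≤ 1) :
    |αc a b zl zr N i| ≤
      B + (A * B / ε + 2 * A + 4 * B + 2 * B ^ 2 / ε + A ^ 2 / ε) / 12 := by
  have hδ : 0 < dz zl zr N := dz_pos h hN
  have hbi : ε ≤ b (gridz zl zr N i) := hbe _ (gridz_mem h hN (by omega))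
  have hbip : 0 < b (gridz zl zr N i) := lt_of_lt_of_le hε hbi
  have hai : |a (gridz zl zr N i)| ≤ A := haA _ (gridz_mem h hN (by omega))
  have hbiB : |b (gridz zl zr N i)| ≤ B := hbB _ (gridz_mem h hN (by omega))
  have hDa := abs_Dz_le h hN a A haA hi1 hi2
  have hDb := abs_Dz_le h hN b B hbB hi1 hi2
  have hDzb := abs_Dzz_le h hN b B hbB hi1 hi2
  have habi : |a (gridz zl zr N i) / b (gridz zl zr N i)| ≤ A / ε := by
    rw [abs_div, abs_of_pos hbip]
    exact div_le_div₀ hA hai hε hbi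
  set x1 := a (gridz zl zr N i) / b (gridz zl zr N i) * Dz b zl zr N i with hx1
  set x2 := 2 * Dz a zl zr N i with hx2
  set x3 := Dzz b zl zr N i with hx3
  set x4 := 2 / b (gridz zl zr N i) * Dz b zl zr N i ^ 2 with hx4
  set x5 := a (gridz zl zr N i) ^ 2 / b (gridz zl zr N i) with hx5
  have t1 : |x1| ≤ A / ε * (B / dz zl zr N) := by
    rw [hx1, abs_mul]
    exact mul_le_mul habi hDb (abs_nonneg _) (by positivity)
  have t2 : |x2| ≤ 2 * (A / dz zl zr N) := by
    rw [hx2, abs_mul, abs_two]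
    exact mul_le_mul_of_nonneg_left hDa (by norm_num)
  have t3 : |x3| ≤ 4 * B / dz zl zr N ^ 2 := hDzb
  have t4 : |x4| ≤ 2 / ε * (B / dz zl zr N) ^ 2 := by
    rw [hx4, abs_mul]
    have u1 : |2 / b (gridz zl zr N i)| ≤ 2 / ε := by
      rw [abs_div, abs_two]
      exact div_le_div₀ (by norm_num) le_rfl hε (by rw [abs_of_pos hbip]; exact hbi)
    have u2 : |Dz b zl zr N i ^ 2| ≤ (B / dz zl zr N) ^ 2 := by
      rw [abs_pow]
      exact pow_le_pow_left₀ (abs_nonneg _) hDb 2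
    exact mul_le_mul u1 u2 (abs_nonneg _) (by positivity)
  have t5 : |x5| ≤ A ^ 2 / ε := by
    rw [hx5, abs_div, abs_of_pos hbip, abs_pow]
    exact div_le_div₀ (by positivity) (pow_le_pow_left₀ (abs_nonneg _) hai 2) hε hbi
  have hT : |x1 - x2 + x3 - x4 + x5| ≤ |x1| + |x2| + |x3| + |x4| + |x5| := by
    have u1 := abs_sub'' x1 x2
    have u2 := abs_add_le (x1 - x2) x3
    have u3 := abs_sub'' (x1 - x2 + x3) x4
    have u4 := abs_add_le (x1 - x2 + x3 - x4) x5
    linarith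
  have u5 : |αc a b zl zr N i| ≤ |b (gridz zl zr N i)| +
      dz zl zr N ^ 2 / 12 * |x1 - x2 + x3 - x4 + x5| := by
    rw [αc]
    refine (abs_add_le _ _).trans ?_
    rw [abs_mul, abs_of_pos (by positivity : (0:ℝ) < dz zl zr N ^ 2 / 12)]
  have e : dz zl zr N ^ 2 / 12 * (A / ε * (B / dz zl zr N) + 2 * (A / dz zl zr N) +
      4 * B / dz zl zr N ^ 2 + 2 / ε * (B / dz zl zr N) ^ 2 + A ^ 2 / ε) =
      (dz zl zr N * (A * B / ε) + dz zl zr N * (2 * A) + 4 * B + 2 * B ^ 2 / ε +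
        dz zl zr N ^ 2 * (A ^ 2 / ε)) / 12 := by
    field_simp
  have hsum : |x1| + |x2| + |x3| + |x4| + |x5| ≤ A / ε * (B / dz zl zr N) +
      2 * (A / dz zl zr N) + 4 * B / dz zl zr N ^ 2 + 2 / ε * (B / dz zl zr N) ^ 2 +
      A ^ 2 / ε := by linarith
  have hmono : dz zl zr N ^ 2 / 12 * |x1 - x2 + x3 - x4 + x5| ≤
      (dz zl zr N * (A * B / ε) + dz zl zr N * (2 * A) + 4 * B + 2 * B ^ 2 / ε +
        dz zl zr N ^ 2 * (A ^ 2 / ε)) / 12 := by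
    rw [← e]
    exact mul_le_mul_of_nonneg_left (hT.trans hsum) (by positivity)
  have d1 : dz zl zr N * (A * B / ε) ≤ A * B / ε := by
    nlinarith [div_nonneg (mul_nonneg hA hB) hε.le]
  have d2 : dz zl zr N * (2 * A) ≤ 2 * A := by nlinarith
  have hδsq : dz zl zr N ^ 2 ≤ 1 := by nlinarith
  have d3 : dz zl zr N ^ 2 * (A ^ 2 / ε) ≤ A ^ 2 / ε := by
    have := mul_le_mul_of_nonneg_right hδsq (div_nonneg (sq_nonneg A) hε.le)
    linarith
  linarith

end bounds2



set_option maxHeartbeats 2000000 in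
/-- There are `K > 0` and `N₀ ≥ 2` such that for all `N ≥ N₀` and `δv > 0`, the matrix
`X` is invertible and `‖X⁻¹ Y‖₂ ≤ K δv/δz²`: the 2-norm of `W = X⁻¹ Y` is `O(δv/δz²)`. -/
theorem stmt14 (zl zr : ℝ) (hz : zl < zr) (ε : ℝ) (hε : 0 < ε) (a b : ℝ → ℝ)
    (ha : ContDiffOn ℝ 2 a (Set.Icc zl zr)) (hb : ContDiffOn ℝ 2 b (Set.Icc zl zr))
    (hbe : ∀ z ∈ Set.Icc zl zr, ε ≤ b z) :
    ∃ K : ℝ, 0 < K ∧ ∃ N₀ : ℕ, 2 ≤ N₀ ∧ ∀ N, N₀ ≤ N → ∀ δv : ℝ, 0 < δv →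
      IsUnit (Xmat a b zl zr N δv).det ∧
      opNorm2 ((Xmat a b zl zr N δv)⁻¹ * Ymat a b zl zr N δv) ≤
        K * δv / dz zl zr N ^ 2 := by
  obtain ⟨A0, hA0⟩ := (isCompact_Icc : IsCompact (Set.Icc zl zr)).exists_bound_of_continuousOn
    ha.continuousOn
  obtain ⟨B0, hB0⟩ := (isCompact_Icc : IsCompact (Set.Icc zl zr)).exists_bound_of_continuousOn
    hb.continuousOn
  set A := max A0 0 with hAdef
  set B := max B0 0 with hBdef
  have hA : 0 ≤ A := le_max_right _ _
  have hB : 0 ≤ B := le_max_right _ _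
  have haA : ∀ z ∈ Set.Icc zl zr, |a z| ≤ A := fun z hz' =>
    le_trans (by simpa using hA0 z hz') (le_max_left _ _)
  have hbB : ∀ z ∈ Set.Icc zl zr, |b z| ≤ B := fun z hz' =>
    le_trans (by simpa using hB0 z hz') (le_max_left _ _)
  have hucb := (isCompact_Icc : IsCompact (Set.Icc zl zr)).uniformContinuousOn_of_continuous
    hb.continuousOn
  obtain ⟨d, hd0, hdc⟩ := Metric.uniformContinuousOn_iff.mp hucb ε hε
  set Z := A + (A ^ 2 / ε + 2 * A * B / ε + 4 * A) / 12 with hZdef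
  set Al := B + (A * B / ε + 2 * A + 4 * B + 2 * B ^ 2 / ε + A ^ 2 / ε) / 12 with hAldef
  set CY := Z + 2 * Al + 1 with hCYdef
  have hZ : 0 ≤ Z := by rw [hZdef]; positivity
  have hAl : 0 ≤ Al := by rw [hAldef]; positivity
  have hCY : 0 < CY := by rw [hCYdef]; linarith
  set dm := min 1 (min (ε / (A + 1)) (d / 4)) with hdmdef
  have hdm : 0 < dm := by
    rw [hdmdef]
    have e1 : (0:ℝ) < ε / (A + 1) := by positivity
    have e2 : (0:ℝ) < d / 4 := by positivity
    exact lt_min one_pos (lt_min e1 e2)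
  obtain ⟨M₀, hM₀⟩ := exists_nat_ge ((zr - zl) / dm)
  refine ⟨6 * CY, by linarith, M₀ + 2, by omega, ?_⟩
  intro N hN δv hδv
  have hN0 : 0 < N := by omega
  have hNR : (0:ℝ) < N := Nat.cast_pos.mpr hN0
  have hδ : 0 < dz zl zr N := dz_pos hz hN0
  have hδdm : dz zl zr N ≤ dm := by
    rw [dz, div_le_iff₀ hNR]
    have h1 : zr - zl ≤ M₀ * dm := by
      rw [div_le_iff₀ hdm] at hM₀; linarith
    have h2 : (M₀:ℝ) ≤ N := Nat.cast_le.mpr (by omega)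
    nlinarith
  have hδ1 : dz zl zr N ≤ 1 := hδdm.trans (min_le_left _ _)
  have hδA : dz zl zr N * A ≤ ε := by
    have h1 : dz zl zr N ≤ ε / (A + 1) := hδdm.trans ((min_le_right _ _).trans (min_le_left _ _))
    have h2 : dz zl zr N * (A + 1) ≤ ε / (A + 1) * (A + 1) :=
      mul_le_mul_of_nonneg_right h1 (by linarith)
    have h3 : ε / (A + 1) * (A + 1) = ε := by field_simp
    nlinarith
  have hδd : 2 * dz zl zr N < d := by
    have h1 : dz zl zr N ≤ d / 4 := hδdm.trans ((min_le_right _ _).trans (min_le_right _ _))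
    linarith
  haveI : NeZero (N - 1) := ⟨by omega⟩
  have hub : ∀ k : ℕ, 1 ≤ k → k + 1 ≤ N →
      |b (gridz zl zr N (k + 1)) - b (gridz zl zr N (k - 1))| ≤ ε := by
    intro k hk1 hk2
    have m1 := gridz_mem hz hN0 hk2
    have m2 := gridz_mem hz hN0 (show k - 1 ≤ N by omega)
    have egrid : gridz zl zr N (k + 1) - gridz zl zr N (k - 1) = 2 * dz zl zr N := by
      rw [gridz, gridz, Nat.cast_sub hk1]
      push_cast
      ring
    have hdist : dist (gridz zl zr N (k + 1)) (gridz zl zr N (k - 1)) < d := by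
      rw [Real.dist_eq, egrid, abs_of_pos (by linarith)]
      linarith
    have hlt := hdc _ m1 _ m2 hdist
    rw [Real.dist_eq] at hlt
    linarith
  have hγ : ∀ k : ℕ, 1 ≤ k → k + 1 ≤ N → |dz zl zr N * γc a b zl zr N k| ≤ 2 :=
    fun k hk1 hk2 =>
      gamma_bound hz hN0 a b ε A hε hA hbe haA hk1 hk2 (hub k hk1 hk2) hδA
  have hζb : ∀ k : ℕ, 1 ≤ k → k + 1 ≤ N → |ζc a b zl zr N k| ≤ Z :=
    fun k hk1 hk2 =>
      zeta_bound hz hN0 a b ε A B hε hA hB hbe haA hbB hk1 hk2 hδ1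
  have hαb : ∀ k : ℕ, 1 ≤ k → k + 1 ≤ N → |αc a b zl zr N k| ≤ Al :=
    fun k hk1 hk2 =>
      alpha_bound hz hN0 a b ε A B hε hA hB hbe haA hbB hk1 hk2 hδ1
  -- bounds on X entries
  have hpb : ∀ k : ℕ, 2 ≤ k → k ≤ N - 1 → |pc a b zl zr N δv k| ≤ 1 / (6 * δv) := by
    intro k hk1 hk2
    have hγk := hγ k (by omega) (by omega)
    have habs : |2 + dz zl zr N * γc a b zl zr N k| ≤ 4 := by
      refine (abs_add_le _ _).trans ?_
      rw [abs_two]; linarith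
    rw [pc, abs_div, abs_of_pos (by positivity : (0:ℝ) < 24 * δv),
      div_le_div_iff₀ (by positivity) (by positivity)]
    nlinarith
  have hrb : ∀ k : ℕ, 1 ≤ k → k + 1 ≤ N - 1 → |rc a b zl zr N δv k| ≤ 1 / (6 * δv) := by
    intro k hk1 hk2
    have hγk := hγ k (by omega) (by omega)
    have habs : |2 - dz zl zr N * γc a b zl zr N k| ≤ 4 := by
      refine (abs_sub'' _ _).trans ?_
      rw [abs_two]; linarith
    rw [rc, abs_div, abs_of_pos (by positivity : (0:ℝ) < 24 * δv),
      div_le_div_iff₀ (by positivity) (by positivity)]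
    nlinarith
  have hlow : ∀ x : Fin (N - 1) → ℝ,
      1 / (2 * δv) * ‖ev x‖ ≤ ‖ev ((Xmat a b zl zr N δv).mulVec x)‖ := by
    intro x
    have hq : ∀ k : ℕ, 1 ≤ k → k ≤ N - 1 → qc δv k = 5 / (6 * δv) := fun _ _ _ => rfl
    have hmain := tri_lower (n := N - 1) (pc a b zl zr N δv) (qc δv) (rc a b zl zr N δv)
      (5 / (6 * δv)) (1 / (6 * δv)) (by positivity) hq hpb hrb x
    have e : 5 / (6 * δv) - 2 * (1 / (6 * δv)) = 1 / (2 * δv) := by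
      field_simp
      ring
    rw [← e]
    exact hmain
  obtain ⟨hdet, hXinv⟩ := inv_bound (Xmat a b zl zr N δv) (1 / (2 * δv)) (by positivity) hlow
  rw [one_div_one_div] at hXinv
  -- bounds on Y entries
  have hδsq : dz zl zr N ^ 2 ≤ 2 * dz zl zr N := by nlinarith
  have hlY : ∀ k : ℕ, 2 ≤ k → k ≤ N - 1 → |lc a b zl zr N k| ≤ CY / dz zl zr N ^ 2 := by
    intro k hk1 hk2
    have hζk := hζb k (by omega) (by omega)
    have hαk := hαb k (by omega) (by omega)
    have t : |lc a b zl zr N k| ≤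
        |ζc a b zl zr N k| / (2 * dz zl zr N) + |αc a b zl zr N k| / dz zl zr N ^ 2 := by
      rw [lc]
      refine (abs_sub'' _ _).trans (le_of_eq ?_)
      rw [abs_div, abs_div, abs_neg, abs_of_pos (by positivity : (0:ℝ) < 2 * dz zl zr N),
        abs_of_pos (by positivity : (0:ℝ) < dz zl zr N ^ 2)]
    have s1 : |ζc a b zl zr N k| / (2 * dz zl zr N) ≤ Z / (2 * dz zl zr N) := by gcongr
    have s2 : |αc a b zl zr N k| / dz zl zr N ^ 2 ≤ Al / dz zl zr N ^ 2 := by gcongr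
    have s3 : Z / (2 * dz zl zr N) ≤ Z / dz zl zr N ^ 2 := by
      rw [div_le_div_iff₀ (by positivity) (by positivity)]
      nlinarith
    have s4 : Z / dz zl zr N ^ 2 + Al / dz zl zr N ^ 2 ≤ CY / dz zl zr N ^ 2 := by
      rw [← add_div, div_le_div_iff₀ (by positivity) (by positivity)]
      have : Z + Al ≤ CY := by rw [hCYdef]; linarith
      nlinarith [sq_nonneg (dz zl zr N)]
    linarith
  have hmY : ∀ k : ℕ, 1 ≤ k → k ≤ N - 1 → |mc a b zl zr N k| ≤ CY / dz zl zr N ^ 2 := by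
    intro k hk1 hk2
    have hαk := hαb k (by omega) (by omega)
    rw [mc, abs_div, abs_mul, abs_two, abs_of_pos (by positivity : (0:ℝ) < dz zl zr N ^ 2)]
    have : 2 * |αc a b zl zr N k| ≤ CY := by rw [hCYdef]; linarith
    gcongr
  have hnY : ∀ k : ℕ, 1 ≤ k → k + 1 ≤ N - 1 → |nc a b zl zr N k| ≤ CY / dz zl zr N ^ 2 := by
    intro k hk1 hk2
    have hζk := hζb k (by omega) (by omega)
    have hαk := hαb k (by omega) (by omega)
    have t : |nc a b zl zr N k| ≤
        |ζc a b zl zr N k| / (2 * dz zl zr N) + |αc a b zl zr N k| / dz zl zr N ^ 2 := by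
      rw [nc]
      refine (abs_sub'' _ _).trans (le_of_eq ?_)
      rw [abs_div, abs_div, abs_of_pos (by positivity : (0:ℝ) < 2 * dz zl zr N),
        abs_of_pos (by positivity : (0:ℝ) < dz zl zr N ^ 2)]
    have s1 : |ζc a b zl zr N k| / (2 * dz zl zr N) ≤ Z / (2 * dz zl zr N) := by gcongr
    have s2 : |αc a b zl zr N k| / dz zl zr N ^ 2 ≤ Al / dz zl zr N ^ 2 := by gcongr
    have s3 : Z / (2 * dz zl zr N) ≤ Z / dz zl zr N ^ 2 := by
      rw [div_le_div_iff₀ (by positivity) (by positivity)]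
      nlinarith
    have s4 : Z / dz zl zr N ^ 2 + Al / dz zl zr N ^ 2 ≤ CY / dz zl zr N ^ 2 := by
      rw [← add_div, div_le_div_iff₀ (by positivity) (by positivity)]
      have : Z + Al ≤ CY := by rw [hCYdef]; linarith
      nlinarith [sq_nonneg (dz zl zr N)]
    linarith
  have hY : opNorm2 (Ymat a b zl zr N δv) ≤ 3 * (CY / dz zl zr N ^ 2) :=
    opNorm2_tri_le (lc a b zl zr N) (mc a b zl zr N) (nc a b zl zr N)
      (CY / dz zl zr N ^ 2) (by positivity) hlY hmY hnY
  have hY0 : 0 ≤ opNorm2 (Ymat a b zl zr N δv) := by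
    rw [opNorm2_def]; exact norm_nonneg _
  refine ⟨hdet, ?_⟩
  calc opNorm2 ((Xmat a b zl zr N δv)⁻¹ * Ymat a b zl zr N δv)
      ≤ opNorm2 (Xmat a b zl zr N δv)⁻¹ * opNorm2 (Ymat a b zl zr N δv) := opNorm2_mul_le _ _
    _ ≤ (2 * δv) * (3 * (CY / dz zl zr N ^ 2)) :=
        mul_le_mul hXinv hY hY0 (by positivity)
    _ = 6 * CY * δv / dz zl zr N ^ 2 := by ring
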